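/- If a finite tree T with p ≥ 2 vertices, q = p − 1 edges and bipartition (X, Y) admits a set-ordered graceful labelling with respect to (X, Y), then there exists a bijection g from V(T) ∪ E(T) onto {1, 2, …, p + q} with g(V(T)) = {1, …, p} and max_{x ∈ X} g(x) < min_{y ∈ Y} g(y), satisfying: (i) g(uv) + |g(u) − g(v)| = p + q + 1 for every edge uv of T; (ii) for every edge uv of T there exists an edge u'v' of T with g(uv) = p + |g(u') − g(v')|; and (iii) for every edge uv of T there exists a vertex w of T with g(uv) + g(w) = p + q + 1. -/
import Mathlib


/-- The induced edge label `|f u - f v|` for a vertex labelling `f`. -/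
def elabel {V : Type*} (f : V → ℕ) (u v : V) : ℕ :=
  max (f u) (f v) - min (f u) (f v)

/-- `(X, Y)` is a bipartition of the graph `G`: the two parts cover all vertices,
are disjoint, and every edge joins a vertex of `X` to a vertex of `Y`. -/
def IsBipartitionOf {V : Type*} (G : SimpleGraph V) (X Y : Finset V) : Prop :=
  (∀ v : V, v ∈ X ∨ v ∈ Y) ∧ (∀ v : V, ¬(v ∈ X ∧ v ∈ Y)) ∧
    ∀ ⦃u v : V⦄, G.Adj u v → (u ∈ X ∧ v ∈ Y) ∨ (u ∈ Y ∧ v ∈ X)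

/-- `f` is a set-ordered graceful labelling of `G` (with `q` edges) with respect to the
bipartition `(X, Y)`: `f` is injective into `{0,…,q}`, the induced edge labels
`|f u - f v|` are pairwise distinct and form exactly `{1,…,q}`, and every label on `X`
is smaller than every label on `Y`. -/
def IsSetOrderedGraceful {V : Type*} (G : SimpleGraph V) (X Y : Finset V) (q : ℕ)
    (f : V → ℕ) : Prop :=
  Function.Injective f ∧ (∀ v : V, f v ≤ q) ∧
    (∀ u v u' v' : V, G.Adj u v → G.Adj u' v' →
      elabel f u v = elabel f u' v' → s(u, v) = s(u', v')) ∧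
    (∀ u v : V, G.Adj u v → 1 ≤ elabel f u v ∧ elabel f u v ≤ q) ∧
    (∀ m : ℕ, 1 ≤ m → m ≤ q → ∃ u v : V, G.Adj u v ∧ elabel f u v = m) ∧
    (∀ x ∈ X, ∀ y ∈ Y, f x < f y)

/-- `f` is a set-ordered odd-graceful labelling of `G` (with `q` edges) with respect to
the bipartition `(X, Y)`: `f` is injective into `{0,…,2q-1}`, the induced edge labels
`|f u - f v|` are pairwise distinct and form exactly the odd numbers `{1,3,…,2q-1}`,
and every label on `X` is smaller than every label on `Y`. -/
def IsSetOrderedOddGraceful {V : Type*} (G : SimpleGraph V) (X Y : Finset V) (q : ℕ)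
    (f : V → ℕ) : Prop :=
  Function.Injective f ∧ (∀ v : V, f v ≤ 2 * q - 1) ∧
    (∀ u v u' v' : V, G.Adj u v → G.Adj u' v' →
      elabel f u v = elabel f u' v' → s(u, v) = s(u', v')) ∧
    (∀ u v : V, G.Adj u v → Odd (elabel f u v) ∧ elabel f u v ≤ 2 * q - 1) ∧
    (∀ m : ℕ, Odd m → m ≤ 2 * q - 1 → ∃ u v : V, G.Adj u v ∧ elabel f u v = m) ∧
    (∀ x ∈ X, ∀ y ∈ Y, f x < f y)

/-- A finite tree with `p ≥ 2` vertices and `q = p - 1` edges admitting a set-ordered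
graceful labelling with respect to a bipartition `(X, Y)` admits a total labelling
`g`, a bijection from `V(T) ∪ E(T)` onto `{1,…,p+q}` with `g(V(T)) = {1,…,p}` and
set-ordered on vertices, such that (i) `g(uv) + |g(u) - g(v)| = p + q + 1` for every
edge `uv`; (ii) for every edge `uv` there is an edge `u'v'` with
`g(uv) = p + |g(u') - g(v')|`; (iii) for every edge `uv` there is a vertex `w` with
`g(uv) + g(w) = p + q + 1`. -/
theorem setOrderedGraceful_to_sixC {V : Type*} [Fintype V] [DecidableEq V]
    (G : SimpleGraph V) (hT : G.IsTree)
    (p : ℕ) (hp : Fintype.card V = p) (hp2 : 2 ≤ p)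
    (X Y : Finset V) (hbip : IsBipartitionOf G X Y)
    (f : V → ℕ) (hf : IsSetOrderedGraceful G X Y (p - 1) f) :
    ∃ (gv : V → ℕ) (ge : Sym2 V → ℕ),
      Function.Injective gv ∧ (∀ v : V, 1 ≤ gv v ∧ gv v ≤ p) ∧
      (∀ m : ℕ, 1 ≤ m → m ≤ p → ∃ v : V, gv v = m) ∧
      (∀ e ∈ G.edgeSet, ∀ e' ∈ G.edgeSet, ge e = ge e' → e = e') ∧
      (∀ e ∈ G.edgeSet, p + 1 ≤ ge e ∧ ge e ≤ p + (p - 1)) ∧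
      (∀ m : ℕ, p + 1 ≤ m → m ≤ p + (p - 1) → ∃ e ∈ G.edgeSet, ge e = m) ∧
      (∀ x ∈ X, ∀ y ∈ Y, gv x < gv y) ∧
      (∀ u v : V, G.Adj u v → ge s(u, v) + elabel gv u v = p + (p - 1) + 1) ∧
      (∀ u v : V, G.Adj u v →
        ∃ u' v' : V, G.Adj u' v' ∧ ge s(u, v) = p + elabel gv u' v') ∧
      (∀ u v : V, G.Adj u v → ∃ w : V, ge s(u, v) + gv w = p + (p - 1) + 1) := by
  obtain ⟨hinj, hle, hdist, hrange, hsurj, hord⟩ := hf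
  set q := p - 1 with hq
  have hqp : q + 1 = p := by omega
  -- f is surjective onto {0,…,q}
  have hfsurj : ∀ m : ℕ, m ≤ q → ∃ v : V, f v = m := by
    intro m hm
    let f' : V → Fin p := fun v => ⟨f v, by have := hle v; omega⟩
    have hinj' : Function.Injective f' := by
      intro a b hab
      apply hinj
      have := congrArg Fin.val hab
      simpa [f'] using this
    have hsurj' : Function.Surjective f' := by
      have : Function.Bijective f' := by
        rw [Fintype.bijective_iff_injective_and_card]
        exact ⟨hinj', by simp [hp]⟩
      exact this.2
    obtain ⟨v, hv⟩ := hsurj' ⟨m, by omega⟩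
    exact ⟨v, congrArg Fin.val hv⟩
  have hsymm : ∀ (u v : V), elabel f u v = elabel f v u := by
    intro u v; unfold elabel; rw [max_comm, min_comm]
  refine ⟨fun v => f v + 1, Sym2.lift ⟨fun u v => p + q + 1 - elabel f u v,
    fun u v => by show p + q + 1 - elabel f u v = p + q + 1 - elabel f v u; rw [hsymm]⟩, ?_, ?_, ?_, ?_, ?_, ?_, ?_, ?_, ?_, ?_⟩
  · intro a b hab
    have h : f a + 1 = f b + 1 := hab
    exact hinj (by omega)
  · intro v; have := hle v; show 1 ≤ f v + 1 ∧ f v + 1 ≤ p; omega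
  · intro m h1 hm
    obtain ⟨v, hv⟩ := hfsurj (m - 1) (by omega)
    exact ⟨v, show f v + 1 = m by omega⟩
  · intro e he e' he'
    induction e with
    | _ u v =>
      induction e' with
      | _ u' v' =>
        intro h
        rw [SimpleGraph.mem_edgeSet] at he he'
        simp only [Sym2.lift_mk] at h
        have h1 := (hrange u v he).2
        have h2 := (hrange u' v' he').2
        exact hdist u v u' v' he he' (by omega)
  · intro e he
    induction e with
    | _ u v =>
      rw [SimpleGraph.mem_edgeSet] at he
      have h1 := hrange u v he
      simp only [Sym2.lift_mk]
      omega
  · intro m h1 hm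
    obtain ⟨u, v, huv, hel⟩ := hsurj (p + q + 1 - m) (by omega) (by omega)
    refine ⟨s(u, v), huv, ?_⟩
    simp only [Sym2.lift_mk]
    have := (hrange u v huv).2
    omega
  · intro x hx y hy
    have := hord x hx y hy; show f x + 1 < f y + 1; omega
  · intro u v huv
    have hel : elabel (fun v => f v + 1) u v = elabel f u v := by
      unfold elabel
      rcases le_total (f u) (f v) with h | h <;>
        simp [max_eq_right, max_eq_left, min_eq_left, min_eq_right, h] <;> omega
    simp only [Sym2.lift_mk, hel]
    have := (hrange u v huv).2
    omega
  · intro u v huv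
    have h1 := hrange u v huv
    obtain ⟨u', v', huv', hel'⟩ := hsurj (q + 1 - elabel f u v) (by omega) (by omega)
    refine ⟨u', v', huv', ?_⟩
    have hel2 : elabel (fun v => f v + 1) u' v' = elabel f u' v' := by
      unfold elabel
      rcases le_total (f u') (f v') with h | h <;>
        simp [max_eq_right, max_eq_left, min_eq_left, min_eq_right, h] <;> omega
    simp only [Sym2.lift_mk, hel2, hel']
    omega
  · intro u v huv
    have h1 := hrange u v huv
    obtain ⟨w, hw⟩ := hfsurj (elabel f u v - 1) (by omega)
    refine ⟨w, ?_⟩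
    simp only [Sym2.lift_mk]
    omega
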